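/- Partition comparison (Lemma 2.6): Suppose Γ satisfies volume control with parameters (α,c_L,c_U). There is a constant C, depending only on α, c_L, c_U, with the following property: let 𝒫 be a countable covering of 𝕍 by balls of radius R ≥ 1 such that every vertex belongs to at most b of its balls, let C₀ > 0, and let 𝒫′ be any countable covering of 𝕍 by balls of radius R′ with R′ ≤ C₀·R. Then for every finite nonempty A ⊆ 𝕍, all symmetric bond weights μ_{xy} ∈ [0,1] and potentials V_x ≥ 0, and every E > 0: N_u^{𝒫,A}(E) ≤ C·(1+C₀)^α·b·N_u^{𝒫′,A}(E). -/

import Mathlib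

open scoped BigOperators

namespace LandscapeGraph

variable {V : Type*}

/-- Ball of real radius `r` with respect to the shortest-path graph metric. -/
def gball (G : SimpleGraph V) (x : V) (r : ℝ) : Set V :=
  {y | G.Reachable x y ∧ (G.dist x y : ℝ) ≤ r}

/-- The degree of a vertex, as a real number. -/
noncomputable def ndeg (G : SimpleGraph V) (x : V) : ℝ := ((G.neighborSet x).ncard : ℝ)

/-- The graph Laplacian `Δf(x) = Σ_{y∼x} (f(y) - f(x))`. -/
noncomputable def lap (G : SimpleGraph V) (f : V → ℝ) (x : V) : ℝ :=
  ∑ᶠ y ∈ G.neighborSet x, (f y - f x)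

/-- Volume control (Ahlfors `α`-regularity) with parameters `(α, cL, cU)`. -/
def VolCtrl (G : SimpleGraph V) (α cL cU : ℝ) : Prop :=
  ∀ x : V, ∀ r : ℝ, 1 ≤ r →
    cL * r ^ α ≤ ((gball G x r).ncard : ℝ) ∧ ((gball G x r).ncard : ℝ) ≤ cU * r ^ α

/-- Degree-weighted average of `f` over a set `S`. -/
noncomputable def wavg (G : SimpleGraph V) (S : Set V) (f : V → ℝ) : ℝ :=
  (∑ᶠ z ∈ S, f z * ndeg G z) / ∑ᶠ z ∈ S, ndeg G z

/-- The Dirichlet-type energy `Σ_{z,w∈S, z∼w} (f z - f w)²` (over ordered pairs). -/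
noncomputable def pairEnergy (G : SimpleGraph V) (S : Set V) (f : V → ℝ) : ℝ :=
  ∑ᶠ z ∈ S, ∑ᶠ w ∈ {w ∈ S | G.Adj z w}, (f z - f w) ^ 2

/-- The weak Poincaré inequality with constants `(CP, lam)`. -/
def WeakPI (G : SimpleGraph V) (CP lam : ℝ) : Prop :=
  ∀ x : V, ∀ r : ℝ, 1 ≤ r → ∀ f : V → ℝ,
    (∑ᶠ z ∈ gball G x r, (f z - wavg G (gball G x r) f) ^ 2) ≤
      CP * r ^ 2 * pairEnergy G (gball G x (lam * r)) f

/-- The Dirichlet restriction `H^A` of the Jacobi operator, acting on functions. -/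
noncomputable def HAop (G : SimpleGraph V) (μ : V → V → ℝ) (Vpot : V → ℝ) (A : Set V)
    (f : V → ℝ) (x : V) : ℝ :=
  ndeg G x * f x - (∑ᶠ y ∈ {y ∈ A | G.Adj x y}, μ x y * f y) + Vpot x * f x

/-- Symmetric bond weights with values in `[0,1]`. -/
def BondWeights (G : SimpleGraph V) (μ : V → V → ℝ) : Prop :=
  ∀ x y, G.Adj x y → μ x y = μ y x ∧ 0 ≤ μ x y ∧ μ x y ≤ 1

/-- `u` is the landscape function of `H^A`: positive on `A` and solving `H^A u = 1` on `A`. -/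
def IsLandscape (G : SimpleGraph V) (μ : V → V → ℝ) (Vpot : V → ℝ) (A : Finset V)
    (u : V → ℝ) : Prop :=
  (∀ x ∈ A, 0 < u x) ∧ ∀ x ∈ A, HAop G μ Vpot (↑A) u x = 1

open Classical in
/-- The Dirichlet restriction `H^A` as a matrix indexed by `A`. -/
noncomputable def HAmat (G : SimpleGraph V) (μ : V → V → ℝ) (Vpot : V → ℝ) (A : Finset V) :
    Matrix A A ℝ := fun x y =>
  (if (x : V) = (y : V) then ndeg G (x : V) + Vpot (x : V) else 0) -
    (if G.Adj (x : V) (y : V) then μ (x : V) (y : V) else 0)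

open Classical in
/-- The integrated density of states: number of eigenvalues `≤ E` (with multiplicity),
divided by `|A|`. -/
noncomputable def NA {A : Finset V} {M : Matrix A A ℝ} (hM : M.IsHermitian) (E : ℝ) : ℝ :=
  ((Finset.univ.filter fun i => hM.eigenvalues i ≤ E).card : ℝ) / (A.card : ℝ)

/-- `Z` is the set of centers of a covering of `𝕍` by balls of radius `R`
with finite overlap constant `b`. -/
def IsCover (G : SimpleGraph V) (Z : Set V) (R b : ℝ) : Prop :=
  (∀ y : V, ∃ z ∈ Z, y ∈ gball G z R) ∧
    ∀ y : V, (({z ∈ Z | y ∈ gball G z R}).ncard : ℝ) ≤ b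

/-- The landscape counting function `N_u^{𝒫,A}(E)` for the cover with centers `Z` and radius `R`:
the number of balls `B` of the cover with `min_{x ∈ B∩A} 1/u(x) ≤ E`, divided by `|A|`. -/
noncomputable def Nu (G : SimpleGraph V) (u : V → ℝ) (A : Finset V) (Z : Set V) (R E : ℝ) : ℝ :=
  (({z ∈ Z | ∃ x ∈ A, x ∈ gball G z R ∧ 1 / u x ≤ E}).ncard : ℝ) / (A.card : ℝ)

/-- The diameter of a finite set of vertices in the graph metric. -/
noncomputable def diamA (G : SimpleGraph V) (A : Finset V) : ℝ :=
  ((A.sup fun x => A.sup fun y => G.dist x y : ℕ) : ℝ)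

/-- `A` has sufficient overlap with balls, with constant `cA`. -/
def SuffOverlap (G : SimpleGraph V) (A : Finset V) (α cA : ℝ) : Prop :=
  ∀ x ∈ A, ∀ r : ℝ, 1 ≤ r → r ≤ 4 * diamA G A →
    cA * r ^ α ≤ (((↑A : Set V) ∩ gball G x r).ncard : ℝ)

/-- The Dirichlet Laplacian `-Δ^B` of a region `B`, acting on functions:
`(-Δ^B f)(x) = deg(x) f(x) - Σ_{y ∈ B, y ∼ x} f(y)`. -/
noncomputable def negDirLap (G : SimpleGraph V) (B : Set V) (f : V → ℝ) (x : V) : ℝ :=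
  ndeg G x * f x - ∑ᶠ y ∈ {y ∈ B | G.Adj x y}, f y

/-- Exterior (vertex) boundary of a set. -/
def extBoundary (G : SimpleGraph V) (S : Set V) : Set V :=
  {x | x ∉ S ∧ ∃ y ∈ S, G.Adj x y}

/-- Ball with respect to an abstract metric `d`. -/
def dball (d : V → V → ℝ) (ξ : V) (R : ℝ) : Set V := {y | d ξ y ≤ R}

/-- The harmonic weight assumption: a metric `d` strongly equivalent (constant `c`) to the
graph metric, together with harmonic weights `h ξ R : B^d(ξ,R) → [0,1]` satisfying the
submean property for subharmonic functions (with equality for harmonic ones), and a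
uniform lower bound `c' / |B^d(ξ,R)|` off `bad' sets `X ξ R` of asymptotically
negligible proportion. -/
structure HarmonicWeight (G : SimpleGraph V) (d : V → V → ℝ) (h : V → ℝ → V → ℝ)
    (X : V → ℝ → Set V) (c c' : ℝ) : Prop where
  c_one : 1 ≤ c
  c'_pos : 0 < c'
  d_self : ∀ x, d x x = 0
  d_eq_zero : ∀ x y, d x y = 0 → x = y
  d_symm : ∀ x y, d x y = d y x
  d_triangle : ∀ x y z, d x z ≤ d x y + d y z
  d_lower : ∀ x y, c⁻¹ * (G.dist x y : ℝ) ≤ d x y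
  d_upper : ∀ x y, d x y ≤ c * (G.dist x y : ℝ)
  h_mem : ∀ ξ (R : ℝ) y, y ∈ dball d ξ R → h ξ R y ∈ Set.Icc (0 : ℝ) 1
  submean : ∀ ξ (R : ℝ), 0 < R → ∀ f : V → ℝ,
    (∀ x ∈ dball d ξ R ∪ extBoundary G (dball d ξ R), 0 ≤ lap G f x) →
    f ξ ≤ ∑ᶠ y ∈ dball d ξ R, h ξ R y * f y
  harm_eq : ∀ ξ (R : ℝ), 0 < R → ∀ f : V → ℝ,
    (∀ x ∈ dball d ξ R ∪ extBoundary G (dball d ξ R), lap G f x = 0) →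
    f ξ = ∑ᶠ y ∈ dball d ξ R, h ξ R y * f y
  X_subset : ∀ ξ (R : ℝ), X ξ R ⊆ dball d ξ R
  h_lower : ∀ ξ (R : ℝ), ∀ y ∈ dball d ξ R \ X ξ R,
    c' / ((dball d ξ R).ncard : ℝ) ≤ h ξ R y
  X_small : ∀ ε : ℝ, 0 < ε → ∃ R₀ : ℝ, ∀ R : ℝ, R₀ ≤ R → ∀ ξ : V,
    ((X ξ R).ncard : ℝ) ≤ ε * ((dball d ξ R).ncard : ℝ)



section Helpers

variable {V : Type*}

lemma gball_mono (G : SimpleGraph V) (x : V) {r r' : ℝ} (h : r ≤ r') :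
    gball G x r ⊆ gball G x r' := fun _ hy => ⟨hy.1, hy.2.trans h⟩

lemma gball_comm {G : SimpleGraph V} {x y : V} {r : ℝ} (h : y ∈ gball G x r) :
    x ∈ gball G y r := ⟨h.1.symm, by rw [SimpleGraph.dist_comm]; exact h.2⟩

lemma gball_finite {G : SimpleGraph V} {α cL cU : ℝ} (hcL : 0 < cL)
    (hvol : VolCtrl G α cL cU) (x : V) (r : ℝ) : (gball G x r).Finite := by
  have h1 : (1:ℝ) ≤ max r 1 := le_max_right _ _
  refine Set.Finite.subset ?_ (gball_mono G x (le_max_left r 1))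
  by_contra hinf
  have hinf' : (gball G x (max r 1)).Infinite := hinf
  have hlow := (hvol x (max r 1) h1).1
  rw [hinf'.ncard] at hlow
  have hpos : 0 < cL * (max r 1) ^ α :=
    mul_pos hcL (Real.rpow_pos_of_pos (lt_of_lt_of_le one_pos h1) α)
  simp only [Nat.cast_zero] at hlow
  linarith

lemma gball_triangle {G : SimpleGraph V} (hconn : G.Connected) {z z' x : V} {r1 r2 : ℝ}
    (h1 : x ∈ gball G z r1) (h2 : x ∈ gball G z' r2) : z ∈ gball G z' (r1 + r2) := by
  refine ⟨hconn.preconnected z' z, ?_⟩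
  have htri := hconn.dist_triangle (u := z') (v := x) (w := z)
  have hx1 : (G.dist z x : ℝ) ≤ r1 := h1.2
  have hx2 : (G.dist z' x : ℝ) ≤ r2 := h2.2
  rw [SimpleGraph.dist_comm] at hx1
  calc (G.dist z' z : ℝ) ≤ (G.dist z' x : ℝ) + (G.dist x z : ℝ) := by exact_mod_cast htri
    _ ≤ r2 + r1 := add_le_add hx2 hx1
    _ = r1 + r2 := add_comm _ _

open Classical in
lemma ball_cover_count {G : SimpleGraph V} (hconn : G.Connected) {α cL cU : ℝ}
    (hcL : 0 < cL) (hvol : VolCtrl G α cL cU)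
    {Z : Set V} {R b : ℝ} (hR : 1 ≤ R) (hb : 0 ≤ b) (hZ : IsCover G Z R b)
    (z' : V) {ρ : ℝ} (hρ : 1 ≤ ρ) :
    ((Z ∩ gball G z' ρ).ncard : ℝ) ≤ cU * (R + ρ) ^ α * b / (cL * R ^ α) := by
  have hfin : ∀ x : V, ∀ r : ℝ, (gball G x r).Finite := gball_finite hcL hvol
  have hSfin : (Z ∩ gball G z' ρ).Finite :=
    Set.Finite.subset (hfin z' ρ) Set.inter_subset_right
  set F : Finset V := hSfin.toFinset with hF
  have hρR : (1:ℝ) ≤ R + ρ := by linarith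
  set T : Finset V := (hfin z' (R + ρ)).toFinset with hT
  -- each ball around a center in F sits inside T
  have hBT : ∀ z ∈ F, ∀ y ∈ gball G z R, y ∈ T := by
    intro z hz y hy
    have hzS : z ∈ Z ∩ gball G z' ρ := hSfin.mem_toFinset.mp hz
    have : y ∈ gball G z' (R + ρ) := gball_triangle hconn (gball_comm hy) hzS.2
    exact (hfin z' (R + ρ)).mem_toFinset.mpr this
  have hcardeq : ∀ z ∈ F, (gball G z R).ncard = (T.filter (fun y => y ∈ gball G z R)).card := by
    intro z hz
    rw [Set.ncard_eq_toFinset_card _ (hfin z R)]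
    congr 1
    ext y
    simp only [Set.Finite.mem_toFinset, Finset.mem_filter]
    exact ⟨fun hy => ⟨hBT z hz y hy, hy⟩, fun hy => hy.2⟩
  -- double counting
  have hswap : ∑ z ∈ F, (T.filter (fun y => y ∈ gball G z R)).card
      = ∑ y ∈ T, (F.filter (fun z => y ∈ gball G z R)).card := by
    simp only [Finset.card_filter]
    exact Finset.sum_comm
  -- inner count bounded by b
  have hinner : ∀ y ∈ T, ((F.filter (fun z => y ∈ gball G z R)).card : ℝ) ≤ b := by
    intro y _
    have hWfin : ({z ∈ Z | y ∈ gball G z R}).Finite :=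
      Set.Finite.subset (hfin y R) (fun z hz => gball_comm hz.2)
    have hsub : ((F.filter (fun z => y ∈ gball G z R)) : Set V) ⊆ {z ∈ Z | y ∈ gball G z R} := by
      intro z hz
      simp only [Finset.coe_filter, Set.mem_setOf_eq] at hz
      exact ⟨(hSfin.mem_toFinset.mp hz.1).1, hz.2⟩
    have h1 : (F.filter (fun z => y ∈ gball G z R)).card ≤ ({z ∈ Z | y ∈ gball G z R}).ncard := by
      rw [← Set.ncard_coe_finset]
      exact Set.ncard_le_ncard hsub hWfin
    calc ((F.filter (fun z => y ∈ gball G z R)).card : ℝ)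
        ≤ (({z ∈ Z | y ∈ gball G z R}).ncard : ℝ) := by exact_mod_cast h1
      _ ≤ b := hZ.2 y
  -- lower bound for each ball's size
  have hlow : ∀ z ∈ F, cL * R ^ α ≤ ((gball G z R).ncard : ℝ) := fun z _ => (hvol z R hR).1
  have hTcard : (T.card : ℝ) ≤ cU * (R + ρ) ^ α := by
    rw [hT, ← Set.ncard_eq_toFinset_card _ (hfin z' (R + ρ))]
    exact (hvol z' (R + ρ) hρR).2
  have hchain : (F.card : ℝ) * (cL * R ^ α) ≤ b * (cU * (R + ρ) ^ α) := by
    have h1 : (F.card : ℝ) * (cL * R ^ α) ≤ ∑ z ∈ F, ((gball G z R).ncard : ℝ) := by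
      calc (F.card : ℝ) * (cL * R ^ α) = ∑ _z ∈ F, (cL * R ^ α) := by
            rw [Finset.sum_const, nsmul_eq_mul]
        _ ≤ ∑ z ∈ F, ((gball G z R).ncard : ℝ) := Finset.sum_le_sum hlow
    have h2 : ∑ z ∈ F, ((gball G z R).ncard : ℝ)
        = ∑ y ∈ T, ((F.filter (fun z => y ∈ gball G z R)).card : ℝ) := by
      have e1 : ∑ z ∈ F, ((gball G z R).ncard : ℝ)
          = ∑ z ∈ F, ((T.filter (fun y => y ∈ gball G z R)).card : ℝ) :=
        Finset.sum_congr rfl (fun z hz => by exact_mod_cast congrArg Nat.cast (hcardeq z hz))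
      rw [e1]
      exact_mod_cast hswap
    have h3 : ∑ y ∈ T, ((F.filter (fun z => y ∈ gball G z R)).card : ℝ) ≤ b * T.card := by
      rw [mul_comm]
      calc ∑ y ∈ T, ((F.filter (fun z => y ∈ gball G z R)).card : ℝ)
          ≤ ∑ _y ∈ T, b := Finset.sum_le_sum hinner
        _ = (T.card : ℝ) * b := by rw [Finset.sum_const, nsmul_eq_mul]
    have h4 : b * (T.card : ℝ) ≤ b * (cU * (R + ρ) ^ α) :=
      mul_le_mul_of_nonneg_left hTcard hb
    linarith
  have hpos : 0 < cL * R ^ α :=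
    mul_pos hcL (Real.rpow_pos_of_pos (lt_of_lt_of_le one_pos hR) α)
  rw [Set.ncard_eq_toFinset_card _ hSfin, ← hF, le_div_iff₀ hpos]
  calc (F.card : ℝ) * (cL * R ^ α) ≤ b * (cU * (R + ρ) ^ α) := hchain
    _ = cU * (R + ρ) ^ α * b := by ring

end Helpers

/-- **Partition comparison** (Lemma 2.6).  There is a constant `C` depending only on
`α, cL, cU` such that landscape counting functions with respect to a covering with overlap
constant `b` and radius `R ≥ 1`, and any covering of comparable radius `R' ≤ C₀·R`, are
comparable: `N_u^{𝒫,A}(E) ≤ C·(1+C₀)^α·b·N_u^{𝒫',A}(E)`. -/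
theorem partition_comparison
    {V : Type*} [Countable V] [Infinite V]
    (G : SimpleGraph V) (hconn : G.Connected)
    (α cL cU : ℝ) (hα : 1 ≤ α) (hcL : 0 < cL) (hcU : 0 < cU)
    (hvol : VolCtrl G α cL cU) :
    ∃ C : ℝ, 0 < C ∧
      ∀ (R R' C₀ b : ℝ), 1 ≤ R → 0 < C₀ → R' ≤ C₀ * R →
        ∀ Z Z' : Set V, IsCover G Z R b →
          (∀ y : V, ∃ z ∈ Z', y ∈ gball G z R') →
          ∀ (A : Finset V), A.Nonempty →
            ∀ (μ : V → V → ℝ) (Vpot : V → ℝ), BondWeights G μ → (∀ x, 0 ≤ Vpot x) →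
              ∀ u : V → ℝ, IsLandscape G μ Vpot A u →
                ∀ E : ℝ,
                  Nu G u A Z R E ≤ C * (1 + C₀) ^ α * b * Nu G u A Z' R' E := by
  classical
  have h2pos : (0:ℝ) < 2 ^ α := Real.rpow_pos_of_pos two_pos α
  refine ⟨2 ^ α * cU / cL, div_pos (mul_pos h2pos hcU) hcL, ?_⟩
  intro R R' C₀ b hR hC₀ hR' Z Z' hZ hZ' A hA μ Vpot hμ hV u hu E
  have hfin : ∀ x : V, ∀ r : ℝ, (gball G x r).Finite := gball_finite hcL hvol
  have hα0 : 0 ≤ α := le_trans zero_le_one hα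
  have hRpos : (0:ℝ) < R := lt_of_lt_of_le one_pos hR
  have hRα : (0:ℝ) < R ^ α := Real.rpow_pos_of_pos hRpos α
  have hC1 : (0:ℝ) < 1 + C₀ := by linarith
  -- b ≥ 1
  have hb1 : (1:ℝ) ≤ b := by
    obtain ⟨y⟩ : Nonempty V := inferInstance
    obtain ⟨z, hz, hmem⟩ := hZ.1 y
    have hWfin : ({z ∈ Z | y ∈ gball G z R}).Finite :=
      Set.Finite.subset (hfin y R) (fun w hw => gball_comm hw.2)
    have h1 : 1 ≤ ({z ∈ Z | y ∈ gball G z R}).ncard :=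
      (Set.ncard_pos hWfin).mpr ⟨z, hz, hmem⟩
    calc (1:ℝ) ≤ (({z ∈ Z | y ∈ gball G z R}).ncard : ℝ) := by exact_mod_cast h1
      _ ≤ b := hZ.2 y
  have hb0 : (0:ℝ) ≤ b := le_trans zero_le_one hb1
  set Good : Set V := {z ∈ Z | ∃ x ∈ A, x ∈ gball G z R ∧ 1 / u x ≤ E} with hGoodDef
  set Good' : Set V := {z ∈ Z' | ∃ x ∈ A, x ∈ gball G z R' ∧ 1 / u x ≤ E} with hGood'Def
  have hGoodfin : Good.Finite := by
    refine Set.Finite.subset (Set.Finite.biUnion A.finite_toSet (fun x _ => hfin x R)) ?_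
    rintro z ⟨-, x, hxA, hxball, -⟩
    exact Set.mem_biUnion hxA (gball_comm hxball)
  have hGood'fin : Good'.Finite := by
    refine Set.Finite.subset (Set.Finite.biUnion A.finite_toSet (fun x _ => hfin x R')) ?_
    rintro z ⟨-, x, hxA, hxball, -⟩
    exact Set.mem_biUnion hxA (gball_comm hxball)
  set GF : Finset V := hGoodfin.toFinset with hGF
  set GF' : Finset V := hGood'fin.toFinset with hGF'
  -- witness and map
  set wx : V → V := fun z =>
    if h : ∃ x, x ∈ A ∧ x ∈ gball G z R ∧ 1 / u x ≤ E then h.choose else z with hwx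
  set f : V → V := fun z => (hZ' (wx z)).choose with hf
  have hwspec : ∀ z ∈ GF, wx z ∈ A ∧ wx z ∈ gball G z R ∧ 1 / u (wx z) ≤ E := by
    intro z hz
    have hzG : z ∈ Good := hGoodfin.mem_toFinset.mp hz
    obtain ⟨-, x, hx⟩ := hzG
    have hex : ∃ x, x ∈ A ∧ x ∈ gball G z R ∧ 1 / u x ≤ E := ⟨x, hx⟩
    simp only [hwx, dif_pos hex]
    exact hex.choose_spec
  have hfspec : ∀ z, f z ∈ Z' ∧ wx z ∈ gball G (f z) R' := fun z => by
    obtain ⟨h1, h2⟩ := (hZ' (wx z)).choose_spec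
    exact ⟨h1, h2⟩
  have hmap : ∀ z ∈ GF, f z ∈ GF' := by
    intro z hz
    obtain ⟨hxA, hxball, hxE⟩ := hwspec z hz
    exact hGood'fin.mem_toFinset.mpr ⟨(hfspec z).1, wx z, hxA, (hfspec z).2, hxE⟩
  -- fiber bound
  have hρ1 : (1:ℝ) ≤ (1 + C₀) * R := le_trans hR (le_mul_of_one_le_left hRpos.le (by linarith))
  have hfiber : ∀ z' ∈ GF', ((GF.filter (fun z => f z = z')).card : ℝ) ≤
      cU * (R + (1 + C₀) * R) ^ α * b / (cL * R ^ α) := by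
    intro z' _
    have hsub : ((GF.filter (fun z => f z = z')) : Set V) ⊆ Z ∩ gball G z' ((1 + C₀) * R) := by
      intro z hz
      simp only [Finset.coe_filter, Set.mem_setOf_eq] at hz
      obtain ⟨hzGF, hfz⟩ := hz
      have hzZ : z ∈ Z := (hGoodfin.mem_toFinset.mp hzGF).1
      obtain ⟨-, hxball, -⟩ := hwspec z hzGF
      have hzt : z ∈ gball G z' (R + R') := by
        rw [← hfz]
        exact gball_triangle hconn hxball (hfspec z).2
      exact ⟨hzZ, gball_mono G z' (by linarith) hzt⟩
    have hcard : (GF.filter (fun z => f z = z')).card ≤ (Z ∩ gball G z' ((1 + C₀) * R)).ncard := by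
      rw [← Set.ncard_coe_finset]
      exact Set.ncard_le_ncard hsub
        (Set.Finite.subset (hfin z' _) Set.inter_subset_right)
    calc ((GF.filter (fun z => f z = z')).card : ℝ)
        ≤ ((Z ∩ gball G z' ((1 + C₀) * R)).ncard : ℝ) := by exact_mod_cast hcard
      _ ≤ cU * (R + (1 + C₀) * R) ^ α * b / (cL * R ^ α) :=
          ball_cover_count hconn hcL hvol hR hb0 hZ z' hρ1
  -- bound the constant
  have hM : cU * (R + (1 + C₀) * R) ^ α * b / (cL * R ^ α) ≤
      2 ^ α * cU / cL * (1 + C₀) ^ α * b := by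
    have h1 : (R + (1 + C₀) * R) ^ α ≤ (2 * (1 + C₀) * R) ^ α := by
      apply Real.rpow_le_rpow (by positivity) (by nlinarith) hα0
    have h2 : (2 * (1 + C₀) * R) ^ α = 2 ^ α * (1 + C₀) ^ α * R ^ α := by
      rw [Real.mul_rpow (by positivity) hRpos.le, Real.mul_rpow (by norm_num) hC1.le]
    have h3 : cU * (R + (1 + C₀) * R) ^ α * b ≤ cU * (2 ^ α * (1 + C₀) ^ α * R ^ α) * b := by
      rw [← h2]
      exact mul_le_mul_of_nonneg_right (mul_le_mul_of_nonneg_left h1 hcU.le) hb0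
    have h4 : cU * (2 ^ α * (1 + C₀) ^ α * R ^ α) * b / (cL * R ^ α) =
        2 ^ α * cU / cL * (1 + C₀) ^ α * b := by
      field_simp
    rw [← h4]
    exact div_le_div_of_nonneg_right h3 (by positivity) |>.trans_eq rfl
  -- count
  have hcount : (GF.card : ℝ) ≤ 2 ^ α * cU / cL * (1 + C₀) ^ α * b * GF'.card := by
    have heq : GF.card = ∑ z' ∈ GF', (GF.filter (fun z => f z = z')).card :=
      Finset.card_eq_sum_card_fiberwise hmap
    have : (GF.card : ℝ) = ∑ z' ∈ GF', ((GF.filter (fun z => f z = z')).card : ℝ) := by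
      rw [heq]; push_cast; rfl
    rw [this]
    calc ∑ z' ∈ GF', ((GF.filter (fun z => f z = z')).card : ℝ)
        ≤ ∑ _z' ∈ GF', (2 ^ α * cU / cL * (1 + C₀) ^ α * b) :=
          Finset.sum_le_sum (fun z' hz' => (hfiber z' hz').trans hM)
      _ = (GF'.card : ℝ) * (2 ^ α * cU / cL * (1 + C₀) ^ α * b) := by
          rw [Finset.sum_const, nsmul_eq_mul]
      _ = 2 ^ α * cU / cL * (1 + C₀) ^ α * b * GF'.card := by ring
  -- conclude
  have hAcard : (0:ℝ) < (A.card : ℝ) := by exact_mod_cast Finset.card_pos.mpr hA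
  unfold Nu
  rw [← hGoodDef, ← hGood'Def, Set.ncard_eq_toFinset_card _ hGoodfin,
    Set.ncard_eq_toFinset_card _ hGood'fin, ← hGF, ← hGF']
  rw [div_le_iff₀ hAcard]
  have hA0 : ((A.card : ℝ)) ≠ 0 := hAcard.ne'
  calc (GF.card : ℝ) ≤ 2 ^ α * cU / cL * (1 + C₀) ^ α * b * GF'.card := hcount
    _ = 2 ^ α * cU / cL * (1 + C₀) ^ α * b * ((GF'.card : ℝ) / (A.card : ℝ)) * (A.card : ℝ) := by
        field_simp


end LandscapeGraph
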